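/- arXiv:1905.12626 — 3 statements merged into one kernel-verified Lean document; each statement's English description precedes it below -/
import Mathlib

section
/- Let v < 0 be real and set Δ̃ = (1/27)(−v)(v − 1)² > 0. Then the transversality quantity C₄ = [cbrt(−1 + 9v + 27√Δ̃) − cbrt(−1 + 9v − 27√Δ̃)] / (36√Δ̃) is strictly positive; in particular C₄ ≠ 0. -/
/-- The real cube root of a real number: `sign(x) · |x|^(1/3)`. -/
noncomputable def cbrt (x : ℝ) : ℝ := Real.sign x * |x| ^ ((1 : ℝ) / 3)

lemma cbrt_pos_eq {x : ℝ} (hx : 0 < x) : cbrt x = x ^ ((1:ℝ)/3) := by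
  simp [cbrt, Real.sign_of_pos hx, abs_of_pos hx]

lemma cbrt_neg_eq {x : ℝ} (hx : x < 0) : cbrt x = -((-x) ^ ((1:ℝ)/3)) := by
  simp [cbrt, Real.sign_of_neg hx, abs_of_neg hx]

lemma cbrt_zero : cbrt 0 = 0 := by simp [cbrt]

lemma cbrt_strictMono : StrictMono cbrt := by
  intro x y hxy
  rcases lt_trichotomy x 0 with hx | hx | hx
  · rcases lt_trichotomy y 0 with hy | hy | hy
    · rw [cbrt_neg_eq hx, cbrt_neg_eq hy]
      have : (-y) ^ ((1:ℝ)/3) < (-x) ^ ((1:ℝ)/3) :=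
        Real.rpow_lt_rpow (by linarith) (by linarith) (by norm_num)
      linarith
    · rw [hy, cbrt_zero, cbrt_neg_eq hx]
      have : (0:ℝ) < (-x) ^ ((1:ℝ)/3) := Real.rpow_pos_of_pos (by linarith) _
      linarith
    · rw [cbrt_neg_eq hx, cbrt_pos_eq hy]
      have h1 : (0:ℝ) < (-x) ^ ((1:ℝ)/3) := Real.rpow_pos_of_pos (by linarith) _
      have h2 : (0:ℝ) < y ^ ((1:ℝ)/3) := Real.rpow_pos_of_pos hy _
      linarith
  · have hy : 0 < y := hx ▸ hxy
    rw [hx, cbrt_zero, cbrt_pos_eq hy]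
    exact Real.rpow_pos_of_pos hy _
  · have hy : 0 < y := lt_trans hx hxy
    rw [cbrt_pos_eq hx, cbrt_pos_eq hy]
    exact Real.rpow_lt_rpow (le_of_lt hx) hxy (by norm_num)

/-- Transversality condition (A1): for `v < 0` and `Δ̃ = (1/27)(-v)(v-1)²`,
the quantity `C₄ = (cbrt(-1 + 9v + 27√Δ̃) - cbrt(-1 + 9v - 27√Δ̃)) / (36√Δ̃)`
is strictly positive; in particular `C₄ ≠ 0`. -/
theorem transversality_C4 (v Δ' : ℝ) (hv : v < 0)
    (hΔ' : Δ' = 1/27 * (-v) * (v - 1) ^ 2) :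
    0 < (cbrt (-1 + 9 * v + 27 * Real.sqrt Δ') -
          cbrt (-1 + 9 * v - 27 * Real.sqrt Δ')) / (36 * Real.sqrt Δ') ∧
    (cbrt (-1 + 9 * v + 27 * Real.sqrt Δ') -
      cbrt (-1 + 9 * v - 27 * Real.sqrt Δ')) / (36 * Real.sqrt Δ') ≠ 0 := by
  have hΔpos : 0 < Δ' := by
    rw [hΔ']
    have h1 : 0 < -v := by linarith
    have h2 : 0 < (v - 1) ^ 2 := by nlinarith
    positivity
  have hs : 0 < Real.sqrt Δ' := Real.sqrt_pos.mpr hΔpos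
  have hlt : -1 + 9 * v - 27 * Real.sqrt Δ' < -1 + 9 * v + 27 * Real.sqrt Δ' := by
    linarith
  have hnum : 0 < cbrt (-1 + 9 * v + 27 * Real.sqrt Δ') -
      cbrt (-1 + 9 * v - 27 * Real.sqrt Δ') :=
    sub_pos.mpr (cbrt_strictMono hlt)
  have hpos : 0 < (cbrt (-1 + 9 * v + 27 * Real.sqrt Δ') -
      cbrt (-1 + 9 * v - 27 * Real.sqrt Δ')) / (36 * Real.sqrt Δ') :=
    div_pos hnum (by linarith)
  exact ⟨hpos, ne_of_gt hpos⟩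
end

section
/- Let v, ρ be real numbers with h_k(ρ) = (k³ − 1)ρ² + (k² − 1)ρ − (k − 1)v ≠ 0 for all k ≥ 2. For each real initial value a, let b(a) : ℕ≥1 → ℝ be the sequence defined by b(a)₁ = a and b(a)_k = −(1/h_k(ρ))·Σ_{i=1}^{k−1} b(a)_{k−i}·b(a)_i·(k − i) for k ≥ 2. Then for every real c and every k ≥ 1, b(c·a)_k = c^k · b(a)_k. In particular, b(a)_k = L_k · a^k where L_k := b(1)_k depends only on v and ρ. -/
/-- Homogeneity of the homoclinic-orbit series coefficients: if `b(a)` is the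
sequence with `b(a)₁ = a` and
`b(a)_k = -(1/h_k(ρ))·Σ_{i=1}^{k-1} b(a)_{k-i} b(a)_i (k-i)` for `k ≥ 2`, where
`h_k(ρ) = (k³-1)ρ² + (k²-1)ρ - (k-1)v ≠ 0` for all `k ≥ 2`, then
`b(c·a)_k = c^k·b(a)_k`; in particular `b(a)_k = L_k·a^k` with `L_k = b(1)_k`. -/
theorem homoclinic_coefficients_homogeneous (v ρ : ℝ) (h : ℕ → ℝ)
    (hdef : ∀ k : ℕ, h k = ((k : ℝ) ^ 3 - 1) * ρ ^ 2 + ((k : ℝ) ^ 2 - 1) * ρ - ((k : ℝ) - 1) * v)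
    (hne : ∀ k, 2 ≤ k → h k ≠ 0)
    (b : ℝ → ℕ → ℝ)
    (hb1 : ∀ a : ℝ, b a 1 = a)
    (hbrec : ∀ (a : ℝ) (k : ℕ), 2 ≤ k →
      b a k = -(1 / h k) * ∑ i ∈ Finset.Ico 1 k, b a (k - i) * b a i * ((k - i : ℕ) : ℝ)) :
    (∀ (c a : ℝ) (k : ℕ), 1 ≤ k → b (c * a) k = c ^ k * b a k) ∧
    (∀ (a : ℝ) (k : ℕ), 1 ≤ k → b a k = b 1 k * a ^ k) := by
  have main : ∀ (c a : ℝ) (k : ℕ), 1 ≤ k → b (c * a) k = c ^ k * b a k := by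
    intro c a k
    induction k using Nat.strong_induction_on with
    | _ k ih =>
      intro hk
      rcases eq_or_lt_of_le hk with h1 | h2
      · simp [← h1, hb1]
      · have hk2 : 2 ≤ k := h2
        have hsum : ∑ i ∈ Finset.Ico 1 k, b (c * a) (k - i) * b (c * a) i * ((k - i : ℕ) : ℝ)
            = c ^ k * ∑ i ∈ Finset.Ico 1 k, b a (k - i) * b a i * ((k - i : ℕ) : ℝ) := by
          rw [Finset.mul_sum]
          apply Finset.sum_congr rfl
          intro i hi
          simp only [Finset.mem_Ico] at hi
          have h1i : 1 ≤ i := hi.1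
          have hik : i < k := hi.2
          have h1ki : 1 ≤ k - i := Nat.le_sub_of_add_le (by omega)
          have hkik : k - i < k := by omega
          rw [ih i hik h1i, ih (k - i) hkik h1ki]
          have hpow : c ^ (k - i) * c ^ i = c ^ k := by
            rw [← pow_add]; congr 1; omega
          rw [← hpow]; ring
        rw [hbrec (c * a) k hk2, hbrec a k hk2, hsum]
        ring
  refine ⟨main, fun a k hk => ?_⟩
  have := main a 1 k hk
  rw [mul_one] at this
  rw [this]; ring
end

section
/- Let v, ρ be real numbers, M > 0, k ≥ 1 a natural number, and (b_i) real numbers. Assume h_{k+1}(ρ) = ((k+1)³ − 1)ρ² + ((k+1)² − 1)ρ − k·v > 0 with k / h_{k+1}(ρ) ≤ 1/(k+1), that |b_i| ≤ |b₁|^i / (i·M^i) for all 1 ≤ i ≤ k, and that |b_{k+1}| ≤ (1/h_{k+1}(ρ))·Σ_{i=1}^{k} |b_{k+1−i}|·|b_i|·(k+1−i). Then |b_{k+1}| ≤ |b₁|^{k+1} / ((k+1)·M^{k+1}). -/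
/-- Induction step for the geometric bound on the homoclinic-orbit series
coefficients: if `h_{k+1}(ρ) > 0` with `k/h_{k+1}(ρ) ≤ 1/(k+1)`, if
`|b_i| ≤ |b₁|^i/(i·M^i)` for `1 ≤ i ≤ k`, and if
`|b_{k+1}| ≤ (1/h_{k+1}(ρ))·Σ_{i=1}^{k} |b_{k+1-i}||b_i|(k+1-i)`, then
`|b_{k+1}| ≤ |b₁|^{k+1}/((k+1)·M^{k+1})`. -/
theorem homoclinic_bound_induction_step (v ρ M : ℝ) (hM : 0 < M)
    (k : ℕ) (hk : 1 ≤ k) (b : ℕ → ℝ)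
    (hpos : 0 < (((k : ℝ) + 1) ^ 3 - 1) * ρ ^ 2 + (((k : ℝ) + 1) ^ 2 - 1) * ρ - (k : ℝ) * v)
    (hfrac : (k : ℝ) / ((((k : ℝ) + 1) ^ 3 - 1) * ρ ^ 2 + (((k : ℝ) + 1) ^ 2 - 1) * ρ - (k : ℝ) * v)
      ≤ 1 / ((k : ℝ) + 1))
    (hind : ∀ i : ℕ, 1 ≤ i → i ≤ k → |b i| ≤ |b 1| ^ i / ((i : ℝ) * M ^ i))
    (hrec : |b (k + 1)| ≤
      (1 / ((((k : ℝ) + 1) ^ 3 - 1) * ρ ^ 2 + (((k : ℝ) + 1) ^ 2 - 1) * ρ - (k : ℝ) * v)) *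
        ∑ i ∈ Finset.Ico 1 (k + 1), |b (k + 1 - i)| * |b i| * ((k + 1 - i : ℕ) : ℝ)) :
    |b (k + 1)| ≤ |b 1| ^ (k + 1) / (((k : ℝ) + 1) * M ^ (k + 1)) := by
  set h := (((k : ℝ) + 1) ^ 3 - 1) * ρ ^ 2 + (((k : ℝ) + 1) ^ 2 - 1) * ρ - (k : ℝ) * v with hh
  have hC : (0:ℝ) ≤ |b 1| ^ (k+1) / M ^ (k+1) := by positivity
  have hsum : ∑ i ∈ Finset.Ico 1 (k + 1), |b (k + 1 - i)| * |b i| * ((k + 1 - i : ℕ) : ℝ)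
      ≤ ∑ i ∈ Finset.Ico 1 (k + 1), |b 1| ^ (k+1) / M ^ (k+1) * (1 / (i:ℝ)) := by
    apply Finset.sum_le_sum
    intro i hi
    simp only [Finset.mem_Ico] at hi
    obtain ⟨hi1, hi2⟩ := hi
    have hik : i ≤ k := Nat.lt_succ_iff.mp hi2
    set j := k + 1 - i with hj
    have hj1 : 1 ≤ j := by omega
    have hjk : j ≤ k := by omega
    have hji : j + i = k + 1 := by omega
    have hbi := hind i hi1 hik
    have hbj := hind j hj1 hjk
    have hipos : (0:ℝ) < i := by exact_mod_cast hi1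
    have hjpos : (0:ℝ) < j := by exact_mod_cast hj1
    calc |b j| * |b i| * (j:ℝ)
        ≤ (|b 1| ^ j / ((j:ℝ) * M ^ j)) * (|b 1| ^ i / ((i:ℝ) * M ^ i)) * (j:ℝ) := by
          apply mul_le_mul_of_nonneg_right _ (le_of_lt hjpos)
          exact mul_le_mul hbj hbi (abs_nonneg _) (by positivity)
      _ = |b 1| ^ (k+1) / M ^ (k+1) * (1 / (i:ℝ)) := by
          rw [← hji, pow_add, pow_add]
          field_simp
  have hsum2 : ∑ i ∈ Finset.Ico 1 (k + 1), (1 / (i:ℝ)) ≤ (k:ℝ) := by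
    calc ∑ i ∈ Finset.Ico 1 (k+1), (1/(i:ℝ)) ≤ ∑ _i ∈ Finset.Ico 1 (k+1), (1:ℝ) := by
          apply Finset.sum_le_sum
          intro i hi
          simp only [Finset.mem_Ico] at hi
          have : (1:ℝ) ≤ i := by exact_mod_cast hi.1
          rw [div_le_one (by linarith)]
          exact this
      _ = (k:ℝ) := by simp
  calc |b (k+1)| ≤ (1/h) * ∑ i ∈ Finset.Ico 1 (k + 1),
          |b (k + 1 - i)| * |b i| * ((k + 1 - i : ℕ) : ℝ) := hrec
    _ ≤ (1/h) * (|b 1|^(k+1)/M^(k+1) * (k:ℝ)) := by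
        apply mul_le_mul_of_nonneg_left _ (by positivity)
        calc _ ≤ ∑ i ∈ Finset.Ico 1 (k + 1), |b 1| ^ (k+1) / M ^ (k+1) * (1 / (i:ℝ)) := hsum
          _ = |b 1| ^ (k+1) / M ^ (k+1) * ∑ i ∈ Finset.Ico 1 (k + 1), (1 / (i:ℝ)) := by
              rw [Finset.mul_sum]
          _ ≤ _ := mul_le_mul_of_nonneg_left hsum2 hC
    _ = (k/h) * (|b 1|^(k+1)/M^(k+1)) := by ring
    _ ≤ (1/((k:ℝ)+1)) * (|b 1|^(k+1)/M^(k+1)) := mul_le_mul_of_nonneg_right hfrac hC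
    _ = |b 1| ^ (k + 1) / (((k : ℝ) + 1) * M ^ (k + 1)) := by
        have : (0:ℝ) < (k:ℝ) + 1 := by positivity
        field_simp
end
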